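/- Let G be a finite group with a normal Sylow p-subgroup P, and let H be a p-complement of G (a subgroup with |H| = |G|/|P| and H ∩ P = 1). If λ is a linear character of P that is G-invariant and has order a power of p, and α is an irreducible character of G/P (viewed as a character of G with P in its kernel), then for the product character χ = λ̂·α (where λ̂ is an extension of λ to G of p-power order), the multiplicity [χ|_H, 1_H] equals [α|_H, 1_H]. -/

import Mathlib

open CategoryTheory
open scoped Classical

noncomputable def cInner {X : Type} (f g : X → ℂ) : ℂ :=
  (Nat.card X : ℂ)⁻¹ * ∑ᶠ x, f x * (starRingEnd ℂ) (g x)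

def IsChar (G : Type) [Group G] (χ : G → ℂ) : Prop :=
  ∃ V : FDRep ℂ G, FDRep.character V = χ

def IsIrrChar (G : Type) [Group G] (χ : G → ℂ) : Prop :=
  ∃ V : FDRep ℂ G, Simple V ∧ FDRep.character V = χ

/-- with P ⊴ G a normal Sylow p-subgroup, H a p-complement, λ̂ a G-invariant
linear extension of p-power order and α ∈ Irr(G/P), [ (λ̂α)|_H, 1_H ] = [ α|_H, 1_H ]. -/
theorem stmt6 {G : Type} [Group G] [Finite G] (p : ℕ) [Fact p.Prime]
    (P : Sylow p G) (hP : (P : Subgroup G).Normal)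
    (H : Subgroup G)
    (hHcard : Nat.card H * Nat.card (P : Subgroup G) = Nat.card G)
    (hHP : H ⊓ (P : Subgroup G) = ⊥)
    (lam : ↥(P : Subgroup G) →* ℂˣ)
    (hinv : ∀ (g : G) (x : ↥(P : Subgroup G)),
      lam ⟨g * x * g⁻¹, hP.conj_mem x.1 x.2 g⟩ = lam x)
    (lamhat : G →* ℂˣ) (hext : ∀ x : ↥(P : Subgroup G), lamhat x = lam x)
    (hord : ∃ k : ℕ, orderOf lamhat = p ^ k)
    (α : G → ℂ) (hα : IsIrrChar G α) (hker : ∀ x ∈ (P : Subgroup G), α x = α 1) :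
    cInner (fun h : H => (lamhat h : ℂ) * α h) (fun _ : H => (1 : ℂ))
      = cInner (fun h : H => α h) (fun _ : H => (1 : ℂ)) := by
  have hcardG : Nat.card G ≠ 0 := Nat.card_pos.ne'
  have hp : p.Prime := Fact.out
  have hPcard : Nat.card (P : Subgroup G) = p ^ (Nat.card G).factorization p :=
    Sylow.card_eq_multiplicity P
  have hpH : ¬ p ∣ Nat.card H := by
    intro hdvd
    obtain ⟨m, hm⟩ := hdvd
    have hdvd2 : p ^ ((Nat.card G).factorization p + 1) ∣ Nat.card G := by
      refine ⟨m, ?_⟩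
      conv_lhs => rw [← hHcard]
      rw [hm, hPcard, pow_succ]
      ring
    exact (Nat.pow_succ_factorization_not_dvd hcardG hp) hdvd2
  have key : ∀ h : H, lamhat (h : G) = 1 := by
    intro h
    obtain ⟨k, hk⟩ := hord
    have h1 : orderOf (lamhat (h : G)) ∣ p ^ k := by
      rw [← hk]
      refine orderOf_dvd_of_pow_eq_one ?_
      have h0 := pow_orderOf_eq_one lamhat
      calc lamhat (h : G) ^ orderOf lamhat = (lamhat ^ orderOf lamhat) (h : G) := by
            simp [-pow_orderOf_eq_one]
        _ = 1 := by rw [h0]; rfl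
    have h2 : orderOf (lamhat (h : G)) ∣ Nat.card H := by
      have hd : orderOf (lamhat (h : G)) ∣ orderOf (h : G) := orderOf_map_dvd lamhat (h : G)
      have h3 : orderOf (h : G) = orderOf h := Subgroup.orderOf_coe h
      exact (h3 ▸ hd).trans (orderOf_dvd_natCard h)
    have hcop : Nat.Coprime (p ^ k) (Nat.card H) :=
      Nat.Coprime.pow_left k ((Nat.Prime.coprime_iff_not_dvd hp).mpr hpH)
    have hone : orderOf (lamhat (h : G)) = 1 :=
      Nat.eq_one_of_dvd_coprimes hcop h1 h2
    exact orderOf_eq_one_iff.mp hone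
  have hfun : (fun h : H => (lamhat h : ℂ) * α h) = fun h : H => α h := by
    funext h
    rw [key h]
    simp
  rw [hfun]
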